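/- Let G be a finitely generated group, H a group, and φ : G → H an injective group homomorphism (so that H is a G-group). If H is 1-equationally Artinian, then H is G-equationally Artinian. -/
import Mathlib


/-- The coefficient-free radical `Rad₁(E)` of a subset `E ⊆ Hⁿ`. -/
def Rad1 (H : Type*) [Group H] {n : ℕ} (E : Set (Fin n → H)) : Set (FreeGroup (Fin n)) :=
  {w | ∀ e ∈ E, FreeGroup.lift e w = 1}

/-- The `G`-radical `Rad_G(E)` of a subset `E ⊆ Hⁿ`, relative to the embedding `φ : G → H`. -/
def RadG {G H : Type*} [Group G] [Group H] (φ : G →* H) {n : ℕ} (E : Set (Fin n → H)) :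
    Set (Monoid.Coprod G (FreeGroup (Fin n))) :=
  {w | ∀ e ∈ E, Monoid.Coprod.lift φ (FreeGroup.lift e) w = 1}

/-- If `G` is finitely generated and the `G`-group `H` is 1-equationally Artinian, then
`H` is `G`-equationally Artinian. -/
theorem fg_oneEqArtinian_to_GEqArtinian {G H : Type*} [Group G] [Group H]
    (hG : Group.FG G) (φ : G →* H) (hφ : Function.Injective φ)
    (h1 : ∀ (n : ℕ) (E : Set (Fin n → H)), ∃ E₀ ⊆ E, E₀.Finite ∧ Rad1 H E₀ = Rad1 H E) :
    ∀ (n : ℕ) (E : Set (Fin n → H)), ∃ E₀ ⊆ E, E₀.Finite ∧ RadG φ E₀ = RadG φ E := by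
  obtain ⟨S, hScl, hSfin⟩ := Group.fg_iff.mp hG
  obtain ⟨m, g, -, hgr⟩ := hSfin.fin_param
  intro n E
  -- the map sending `e : Fin n → H` to its extension by the images of generators of `G`
  set f : (Fin n → H) → (Fin (n + m) → H) := fun e => Fin.append e (φ ∘ g) with hfdef
  -- the comparison homomorphism
  set χ : FreeGroup (Fin (n + m)) →* Monoid.Coprod G (FreeGroup (Fin n)) :=
    FreeGroup.lift (Fin.append (fun j => Monoid.Coprod.inr (FreeGroup.of j))
      (fun j => Monoid.Coprod.inl (g j))) with hχdef
  -- χ is surjective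
  have hχsurj : Function.Surjective χ := by
    rw [← MonoidHom.range_eq_top, ← top_le_iff, ← Monoid.Coprod.closure_range_inl_union_inr,
      Subgroup.closure_le]
    rintro x (⟨a, rfl⟩ | ⟨w, rfl⟩)
    · have ha : a ∈ Subgroup.closure (Set.range g) := by
        rw [hgr, hScl]; trivial
      have : Subgroup.closure (Set.range g) ≤
          Subgroup.comap (Monoid.Coprod.inl : G →* Monoid.Coprod G (FreeGroup (Fin n)))
            χ.range := by
        rw [Subgroup.closure_le]
        rintro y ⟨j, rfl⟩
        exact ⟨FreeGroup.of (Fin.natAdd n j), by simp [hχdef, Fin.append_right]⟩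
      exact this ha
    · have hw : w ∈ Subgroup.closure (Set.range (FreeGroup.of : Fin n → FreeGroup (Fin n))) := by
        rw [FreeGroup.closure_range_of]; trivial
      have : Subgroup.closure (Set.range (FreeGroup.of : Fin n → FreeGroup (Fin n))) ≤
          Subgroup.comap
            (Monoid.Coprod.inr : FreeGroup (Fin n) →* Monoid.Coprod G (FreeGroup (Fin n)))
            χ.range := by
        rw [Subgroup.closure_le]
        rintro y ⟨j, rfl⟩
        exact ⟨FreeGroup.of (Fin.castAdd m j), by simp [hχdef, Fin.append_left]⟩
      exact this hw
  -- the commuting square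
  have hcomm : ∀ (e : Fin n → H) (v : FreeGroup (Fin (n + m))),
      Monoid.Coprod.lift φ (FreeGroup.lift e) (χ v) = FreeGroup.lift (f e) v := by
    intro e v
    have : (Monoid.Coprod.lift φ (FreeGroup.lift e)).comp χ = FreeGroup.lift (f e) := by
      apply FreeGroup.ext_hom
      intro i
      induction i using Fin.addCases with
      | left j => simp [hχdef, hfdef, Fin.append_left]
      | right j => simp [hχdef, hfdef, Fin.append_right]
    calc Monoid.Coprod.lift φ (FreeGroup.lift e) (χ v)
        = ((Monoid.Coprod.lift φ (FreeGroup.lift e)).comp χ) v := rfl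
      _ = FreeGroup.lift (f e) v := by rw [this]
  obtain ⟨E₀, hE₀E, hE₀fin, hrad⟩ :
      ∃ E₀ ⊆ E, E₀.Finite ∧ Rad1 H (f '' E₀) = Rad1 H (f '' E) := by
    have := h1 (n + m) (f '' E)
    rwa [Set.exists_subset_image_finite_and] at this
  refine ⟨E₀, hE₀E, hE₀fin, ?_⟩
  apply Set.eq_of_subset_of_subset
  · intro w hw e he
    obtain ⟨v, rfl⟩ := hχsurj w
    have hv : v ∈ Rad1 H (f '' E₀) := by
      rintro x ⟨e₀, he₀, rfl⟩
      rw [← hcomm]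
      exact hw e₀ he₀
    rw [hrad] at hv
    rw [hcomm]
    exact hv (f e) ⟨e, he, rfl⟩
  · intro w hw e he
    exact hw e (hE₀E he)
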